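/- Exchange of contour integration with a rank-one perturbed determinant: let N ≥ 1, let K be a complex N×N matrix, let r₁, r₂ > 0, let F (resp. G) be a continuous complex-valued function on the circle |z| = r₁ (resp. |w| = r₂), and let z ↦ a^z ∈ ℂ^N and w ↦ b^w ∈ ℂ^N be continuous on those circles. Then (1/(2πi))² ∮_{|z|=r₁} (dz/z) ∮_{|w|=r₂} (dw/w) F(z) G(w) det( I − K + a^z ⊗ b^w ) = det( I − K + Ā ⊗ B̄ ) + ( F̄ · Ḡ − 1 ) · det( I − K ), where Ā := (1/(2πi)) ∮_{|z|=r₁} F(z) a^z dz/z, B̄ := (1/(2πi)) ∮_{|w|=r₂} G(w) b^w dw/w, F̄ := (1/(2πi)) ∮_{|z|=r₁} F(z) dz/z, and Ḡ := (1/(2πi)) ∮_{|w|=r₂} G(w) dw/w. (This is the finite-dimensional case of Johansson's lemma for trace-class operators.) -/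

import Mathlib

open Matrix

section JEaux
open Polynomial




lemma det_add_vecMulVec' {n : ℕ} (M : Matrix (Fin n) (Fin n) ℂ) (u v : Fin n → ℂ) :
    (M + vecMulVec u v).det = M.det + v ⬝ᵥ (M.adjugate *ᵥ u) := by
  classical
  have key : ∀ B : Matrix (Fin n) (Fin n) ℂ, IsUnit B.det →
      (B + vecMulVec u v).det = B.det + v ⬝ᵥ (B.adjugate *ᵥ u) := by
    intro B hB
    have hd : B.det ≠ 0 := hB.ne_zero
    rw [vecMulVec_eq Unit, Matrix.det_add_replicateCol_mul_replicateRow hB,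
      Matrix.det_unique (1 + replicateRow Unit v * B⁻¹ * replicateCol Unit u)]
    have hentry : (1 + replicateRow Unit v * B⁻¹ * replicateCol Unit u : Matrix Unit Unit ℂ) default default
        = 1 + v ⬝ᵥ (B⁻¹ *ᵥ u) := by
      rw [Matrix.add_apply, Matrix.one_apply_eq, Matrix.mul_assoc, ← Matrix.replicateCol_mulVec,
        Matrix.replicateRow_mul_replicateCol_apply]
    rw [hentry, Matrix.inv_def, Ring.inverse_eq_inv, Matrix.smul_mulVec,
      dotProduct_smul, smul_eq_mul]
    field_simp
  -- density argument
  set p : Polynomial ℂ := Matrix.charpoly (-M) with hp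
  have hpe : ∀ t : ℂ, p.eval t = (M + t • 1).det := by
    intro t
    have h1 := RingHom.map_det (Polynomial.evalRingHom t) ((-M).charmatrix)
    rw [hp, Matrix.charpoly]
    have h2 : p.eval t = ((Polynomial.evalRingHom t).mapMatrix ((-M).charmatrix)).det := h1
    rw [hp, Matrix.charpoly] at h2
    rw [h2]
    congr 1
    ext i j
    by_cases hij : i = j
    · subst hij
      simp [charmatrix_apply_eq, Matrix.add_apply, Matrix.one_apply_eq, add_comm]
    · simp [charmatrix_apply_ne _ _ _ hij, Matrix.add_apply, Matrix.one_apply_ne hij]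
  have hp0 : p ≠ 0 := (Matrix.charpoly_monic _).ne_zero
  have hs : {t : ℂ | p.IsRoot t}.Finite := p.finite_setOf_isRoot hp0
  have hdense : Dense {t : ℂ | p.IsRoot t}ᶜ := hs.countable.dense_compl ℂ
  have hMt : Continuous fun t : ℂ => M + t • (1 : Matrix (Fin n) (Fin n) ℂ) :=
    continuous_const.add (continuous_id.smul continuous_const)
  have hf : Continuous fun t : ℂ => (M + t • 1 + vecMulVec u v).det :=
    (hMt.add continuous_const).matrix_det
  have hadj : Continuous fun t : ℂ => (M + t • 1).adjugate := hMt.matrix_adjugate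
  have hg : Continuous fun t : ℂ => (M + t • 1).det + v ⬝ᵥ ((M + t • 1).adjugate *ᵥ u) := by
    refine hMt.matrix_det.add ?_
    simp only [dotProduct, mulVec]
    exact continuous_finset_sum _ fun j _ => continuous_const.mul
      (continuous_finset_sum _ fun i _ =>
        (((continuous_apply i).comp ((continuous_apply j).comp hadj)).mul continuous_const))
  have heq : Set.EqOn (fun t : ℂ => (M + t • 1 + vecMulVec u v).det)
      (fun t : ℂ => (M + t • 1).det + v ⬝ᵥ ((M + t • 1).adjugate *ᵥ u))
      {t : ℂ | p.IsRoot t}ᶜ := by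
    intro t ht
    have : (M + t • 1).det ≠ 0 := by
      rw [← hpe t]
      exact ht
    exact key _ (isUnit_iff_ne_zero.mpr this)
  have := Continuous.ext_on hdense hf hg heq
  have h0 := congrFun this 0
  simpa using h0


section helpers

lemma myCircleIntegrable_const_mul {f : ℂ → ℂ} {c : ℂ} {R : ℝ}
    (h : CircleIntegrable f c R) (a : ℂ) : CircleIntegrable (fun z => a * f z) c R := by
  unfold CircleIntegrable at h ⊢
  exact h.const_mul a

lemma myCircleIntegrable_sum {ι : Type*} (s : Finset ι) (f : ι → ℂ → ℂ) {c : ℂ} {R : ℝ}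
    (h : ∀ i ∈ s, CircleIntegrable (f i) c R) :
    CircleIntegrable (fun z => ∑ i ∈ s, f i z) c R := by
  classical
  induction s using Finset.induction_on with
  | empty => simpa using circleIntegrable_const (0 : ℂ) c R
  | insert _ _ hx ih =>
    rename_i x s'
    simp only [Finset.sum_insert hx]
    exact (h x (Finset.mem_insert_self _ _)).add
      (ih fun i hi => h i (Finset.mem_insert_of_mem hi))

lemma myCircleIntegral_add {f g : ℂ → ℂ} {c : ℂ} {R : ℝ}
    (hf : CircleIntegrable f c R) (hg : CircleIntegrable g c R) :
    (∮ z in C(c, R), (f z + g z)) = (∮ z in C(c, R), f z) + ∮ z in C(c, R), g z := by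
  simp only [circleIntegral, smul_add, intervalIntegral.integral_add hf.out hg.out]

lemma myCircleIntegral_sum {ι : Type*} (s : Finset ι) (f : ι → ℂ → ℂ) {c : ℂ} {R : ℝ}
    (h : ∀ i ∈ s, CircleIntegrable (f i) c R) :
    (∮ z in C(c, R), ∑ i ∈ s, f i z) = ∑ i ∈ s, ∮ z in C(c, R), f i z := by
  simp only [circleIntegral, Finset.smul_sum]
  exact intervalIntegral.integral_finset_sum fun i hi => (h i hi).out

lemma ptwise1 {n : ℕ} (x y d q : ℂ) (t m : Fin n → ℂ) :
    x * y * (d + ∑ j, t j * m j) / q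
      = (x * d) * (y / q) + ∑ j, m j * (x * (y * t j / q)) := by
  rw [mul_add, add_div, Finset.mul_sum, Finset.sum_div]
  congr 1
  · ring
  · exact Finset.sum_congr rfl fun j _ => by ring

lemma ptwise2 {n : ℕ} (x d g q : ℂ) (A : Matrix (Fin n) (Fin n) ℂ) (u e : Fin n → ℂ) :
    ((x * d) * g + ∑ j, (∑ i, A j i * u i) * (x * e j)) / q
      = (d * g) * (x / q) + ∑ j, ∑ i, (A j i * e j) * (x * u i / q) := by
  rw [add_div, Finset.sum_div]
  congr 1
  · ring
  · refine Finset.sum_congr rfl fun j _ => ?_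
    rw [Finset.sum_mul, Finset.sum_div]
    exact Finset.sum_congr rfl fun i _ => by ring

lemma final_alg {n : ℕ} (c₀ d If Ig : ℂ) (A : Matrix (Fin n) (Fin n) ℂ) (Ia Ib : Fin n → ℂ) :
    c₀ ^ 2 * ((d * Ig) * If + ∑ j, ∑ i, (A j i * Ib j) * Ia i)
      = (d + ∑ j, (c₀ * Ib j) * ∑ i, A j i * (c₀ * Ia i))
        + ((c₀ * If) * (c₀ * Ig) - 1) * d := by
  have h1 : ∀ j, (c₀ * Ib j) * ∑ i, A j i * (c₀ * Ia i)
      = c₀ ^ 2 * ∑ i, (A j i * Ib j) * Ia i := by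
    intro j
    rw [Finset.mul_sum, Finset.mul_sum]
    exact Finset.sum_congr rfl fun i _ => by ring
  simp only [h1]
  rw [← Finset.mul_sum]
  ring

end helpers

end JEaux

/-- **Johansson's exchange lemma (finite-dimensional case)**: contour integration against
a rank-one perturbed determinant can be exchanged with the determinant:
`(1/(2πi))² ∮∮ (dz/z)(dw/w) F(z) G(w) det(I - K + a^z ⊗ b^w)
  = det(I - K + Ā ⊗ B̄) + (F̄·Ḡ - 1)·det(I - K)`,
where `Ā, B̄, F̄, Ḡ` are the corresponding circle averages. -/
theorem johansson_exchange_lemma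
    (N : ℕ) (hN : 1 ≤ N) (K : Matrix (Fin N) (Fin N) ℂ)
    (r₁ r₂ : ℝ) (h₁ : 0 < r₁) (h₂ : 0 < r₂)
    (F G : ℂ → ℂ) (a b : ℂ → Fin N → ℂ)
    (hF : ContinuousOn F (Metric.sphere (0 : ℂ) r₁))
    (hG : ContinuousOn G (Metric.sphere (0 : ℂ) r₂))
    (ha : ContinuousOn a (Metric.sphere (0 : ℂ) r₁))
    (hb : ContinuousOn b (Metric.sphere (0 : ℂ) r₂)) :
    (1 / (2 * Real.pi * Complex.I)) ^ 2 *
        (∮ z in C(0, r₁), (∮ w in C(0, r₂),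
          F z * G w * (1 - K + vecMulVec (a z) (b w)).det / w) / z)
      = (1 - K + vecMulVec
            (fun i => (1 / (2 * Real.pi * Complex.I)) * ∮ z in C(0, r₁), F z * a z i / z)
            (fun i => (1 / (2 * Real.pi * Complex.I)) * ∮ w in C(0, r₂), G w * b w i / w)).det
        + (((1 / (2 * Real.pi * Complex.I)) * ∮ z in C(0, r₁), F z / z) *
             ((1 / (2 * Real.pi * Complex.I)) * ∮ w in C(0, r₂), G w / w) - 1) *
            (1 - K).det := by
  classical
  have hdet' : ∀ u v : Fin N → ℂ,
      (1 - K + vecMulVec u v).det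
        = (1 - K).det + ∑ j, v j * ∑ i, (1 - K).adjugate j i * u i := by
    intro u v
    rw [det_add_vecMulVec']
    simp [dotProduct, mulVec]
  -- nonvanishing on the spheres
  have hz₁ : ∀ z ∈ Metric.sphere (0 : ℂ) r₁, z ≠ 0 :=
    fun z hz => Metric.ne_of_mem_sphere hz h₁.ne'
  have hz₂ : ∀ w ∈ Metric.sphere (0 : ℂ) r₂, w ≠ 0 :=
    fun w hw => Metric.ne_of_mem_sphere hw h₂.ne'
  -- integrabilities
  have hFi : CircleIntegrable (fun z => F z / z) 0 r₁ :=
    ContinuousOn.circleIntegrable h₁.le (hF.div continuous_id.continuousOn hz₁)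
  have hFai : ∀ i, CircleIntegrable (fun z => F z * a z i / z) 0 r₁ := fun i =>
    ContinuousOn.circleIntegrable h₁.le
      ((hF.mul ((continuous_apply i).comp_continuousOn ha)).div
        continuous_id.continuousOn hz₁)
  have hGi : CircleIntegrable (fun w => G w / w) 0 r₂ :=
    ContinuousOn.circleIntegrable h₂.le (hG.div continuous_id.continuousOn hz₂)
  have hGbi : ∀ j, CircleIntegrable (fun w => G w * b w j / w) 0 r₂ := fun j =>
    ContinuousOn.circleIntegrable h₂.le
      ((hG.mul ((continuous_apply j).comp_continuousOn hb)).div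
        continuous_id.continuousOn hz₂)
  -- inner integral
  have hinner : ∀ z : ℂ,
      (∮ w in C(0, r₂), F z * G w *
          ((1 - K).det + ∑ j, b w j * ∑ i, (1 - K).adjugate j i * a z i) / w)
        = (F z * (1 - K).det) * (∮ w in C(0, r₂), G w / w)
          + ∑ j, (∑ i, (1 - K).adjugate j i * a z i) *
              (F z * (∮ w in C(0, r₂), G w * b w j / w)) := by
    intro z
    have h1 : (fun w => F z * G w *
          ((1 - K).det + ∑ j, b w j * ∑ i, (1 - K).adjugate j i * a z i) / w)
        = fun w => (F z * (1 - K).det) * (G w / w)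
            + ∑ j, (∑ i, (1 - K).adjugate j i * a z i) * (F z * (G w * b w j / w)) :=
      funext fun w => ptwise1 (F z) (G w) _ w _ _
    rw [h1, myCircleIntegral_add (myCircleIntegrable_const_mul hGi _)
      (myCircleIntegrable_sum Finset.univ _ fun j _ =>
        myCircleIntegrable_const_mul (myCircleIntegrable_const_mul (hGbi j) (F z)) _)]
    congr 1
    · exact circleIntegral.integral_const_mul _ _ _ _
    · rw [myCircleIntegral_sum Finset.univ _ fun j _ =>
        myCircleIntegrable_const_mul (myCircleIntegrable_const_mul (hGbi j) (F z)) _]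
      exact Finset.sum_congr rfl fun j _ => by
        rw [circleIntegral.integral_const_mul, circleIntegral.integral_const_mul]
  simp only [hdet', hinner]
  -- outer integral
  have houter :
      (∮ z in C(0, r₁), ((F z * (1 - K).det) * (∮ w in C(0, r₂), G w / w)
          + ∑ j, (∑ i, (1 - K).adjugate j i * a z i) *
              (F z * (∮ w in C(0, r₂), G w * b w j / w))) / z)
        = ((1 - K).det * (∮ w in C(0, r₂), G w / w)) * (∮ z in C(0, r₁), F z / z)
          + ∑ j, ∑ i, ((1 - K).adjugate j i * (∮ w in C(0, r₂), G w * b w j / w)) *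
              (∮ z in C(0, r₁), F z * a z i / z) := by
    have h1 : (fun z => ((F z * (1 - K).det) * (∮ w in C(0, r₂), G w / w)
          + ∑ j, (∑ i, (1 - K).adjugate j i * a z i) *
              (F z * (∮ w in C(0, r₂), G w * b w j / w))) / z)
        = fun z => ((1 - K).det * (∮ w in C(0, r₂), G w / w)) * (F z / z)
            + ∑ j, ∑ i, ((1 - K).adjugate j i * (∮ w in C(0, r₂), G w * b w j / w)) *
                (F z * a z i / z) :=
      funext fun z => ptwise2 (F z) _ _ z _ _ _
    rw [h1, myCircleIntegral_add (myCircleIntegrable_const_mul hFi _)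
      (myCircleIntegrable_sum Finset.univ _ fun j _ =>
        myCircleIntegrable_sum Finset.univ _ fun i _ =>
          myCircleIntegrable_const_mul (hFai i) _)]
    congr 1
    · exact circleIntegral.integral_const_mul _ _ _ _
    · rw [myCircleIntegral_sum Finset.univ _ fun j _ =>
        myCircleIntegrable_sum Finset.univ _ fun i _ =>
          myCircleIntegrable_const_mul (hFai i) _]
      refine Finset.sum_congr rfl fun j _ => ?_
      rw [myCircleIntegral_sum Finset.univ _ fun i _ =>
        myCircleIntegrable_const_mul (hFai i) _]
      exact Finset.sum_congr rfl fun i _ => circleIntegral.integral_const_mul _ _ _ _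
  rw [houter]
  exact final_alg _ _ _ _ _ _ _
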